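/- For s ≥ 3, if G is a bipartite graph containing no induced subgraph isomorphic to sP_1+P_3 (the disjoint union of s isolated vertices and a path on three vertices), then ivc(G) ≤ vc(G) + s − 2. -/

import Mathlib

open SimpleGraph

/-- `S` is an independent set of `G`. -/
def IsIS {V : Type*} (G : SimpleGraph V) (S : Set V) : Prop :=
  S.Pairwise fun u v => ¬ G.Adj u v

/-- `G` contains no induced subgraph isomorphic to `H`. -/
def HFree {W V : Type*} (H : SimpleGraph W) (G : SimpleGraph V) : Prop :=
  IsEmpty (H ↪g G)

/-- `G` is bipartite: the vertex set splits into two independent sets. -/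
def IsBip {V : Type*} (G : SimpleGraph V) : Prop :=
  ∃ X : Set V, IsIS G X ∧ IsIS G Xᶜ

/-- `S` is a vertex cover of `G`. -/
def IsVC {V : Type*} (G : SimpleGraph V) (S : Finset V) : Prop :=
  ∀ ⦃u v⦄, G.Adj u v → u ∈ S ∨ v ∈ S

/-- minimum size of a vertex cover. -/
noncomputable def vc {V : Type*} (G : SimpleGraph V) : ℕ :=
  sInf {n | ∃ S : Finset V, IsVC G S ∧ S.card = n}

/-- minimum size of an independent vertex cover. -/
noncomputable def ivc {V : Type*} (G : SimpleGraph V) : ℕ :=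
  sInf {n | ∃ S : Finset V, IsVC G S ∧ IsIS G ↑S ∧ S.card = n}

/-- `sP_1 + P_3`: `s` isolated vertices plus a path on three vertices. -/
def sP1P3 (s : ℕ) : SimpleGraph (Fin s ⊕ Fin 3) :=
  SimpleGraph.fromRel fun u v =>
    (u = Sum.inr 0 ∧ v = Sum.inr 1) ∨ (u = Sum.inr 1 ∧ v = Sum.inr 2)

theorem stmt_8 {V : Type*} [Fintype V] (G : SimpleGraph V) (s : ℕ) (hs : 3 ≤ s)
    (hbip : IsBip G) (hfree : HFree (sP1P3 s) G) :
    ivc G ≤ vc G + (s - 2) := by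
  classical
  obtain ⟨X, hX, hXc⟩ := hbip
  have hivc_le : ∀ S : Finset V, IsVC G S → IsIS G ↑S → ivc G ≤ S.card :=
    fun S h1 h2 => Nat.sInf_le ⟨S, h1, h2, rfl⟩
  have hne : {n | ∃ S : Finset V, IsVC G S ∧ S.card = n}.Nonempty :=
    ⟨(Finset.univ : Finset V).card, Finset.univ, fun u v _ => Or.inl (Finset.mem_univ u), rfl⟩
  obtain ⟨C, hC, hCcard⟩ := Nat.sInf_mem hne
  have hCvc : C.card = vc G := hCcard
  set A : Finset V := C.filter (fun x => x ∈ X) with hAdef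
  set B : Finset V := C.filter (fun x => x ∉ X) with hBdef
  have hABcard : A.card + B.card = C.card :=
    Finset.card_filter_add_card_filter_not (fun x => x ∈ X)
  have hvceq : A.card + B.card = vc G := by rw [hABcard]; exact hCvc
  have hmemA : ∀ {x}, x ∈ A ↔ x ∈ C ∧ x ∈ X := fun {x} => Finset.mem_filter
  have hmemB : ∀ {x}, x ∈ B ↔ x ∈ C ∧ x ∉ X := fun {x} => Finset.mem_filter
  set D : Finset V := Finset.univ.filter (fun d => d ∉ C ∧ ∃ b, b ∈ B ∧ G.Adj d b) with hDdef
  set E : Finset V := Finset.univ.filter (fun e => e ∉ C ∧ ∃ a, a ∈ A ∧ G.Adj e a) with hEdef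
  have hmemD : ∀ {x}, x ∈ D ↔ x ∉ C ∧ ∃ b, b ∈ B ∧ G.Adj x b := by
    intro x; simp [hDdef]
  have hmemE : ∀ {x}, x ∈ E ↔ x ∉ C ∧ ∃ a, a ∈ A ∧ G.Adj x a := by
    intro x; simp [hEdef]
  -- no edge inside X, no edge inside Xᶜ
  have hXadj : ∀ {u v}, G.Adj u v → u ∈ X → v ∈ X → False :=
    fun {u v} h hu hv => hX hu hv h.ne h
  have hXcadj : ∀ {u v}, G.Adj u v → u ∉ X → v ∉ X → False :=
    fun {u v} h hu hv => hXc hu hv h.ne h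
  have hnadjCC : ∀ {x y}, x ∉ C → y ∉ C → ¬ G.Adj x y := by
    intro x y hx hy h
    rcases hC h with h' | h' <;> [exact hx h'; exact hy h']
  have hDX : ∀ {d}, d ∈ D → d ∈ X := by
    intro d hd
    obtain ⟨-, b, hb, hadj⟩ := hmemD.mp hd
    by_contra hdX
    exact hXcadj hadj hdX (hmemB.mp hb).2
  have hEXc : ∀ {e}, e ∈ E → e ∉ X := by
    intro e he
    obtain ⟨-, a, ha, hadj⟩ := hmemE.mp he
    intro heX
    exact hXadj hadj heX (hmemA.mp ha).2
  by_cases hcase : ∀ b ∈ B, ∀ d₁ ∈ D, ∀ d₂ ∈ D, G.Adj b d₁ → G.Adj b d₂ → d₁ = d₂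
  · -- the cover A ∪ D works: |D| ≤ |B|
    have hDB : D.card ≤ B.card := by
      set fb : V → V := fun d => if h : ∃ b, b ∈ B ∧ G.Adj d b then h.choose else d with hfbdef
      have hfbspec : ∀ d ∈ D, fb d ∈ B ∧ G.Adj d (fb d) := by
        intro d hd
        obtain ⟨-, hex⟩ := hmemD.mp hd
        simp only [hfbdef, dif_pos hex]
        exact hex.choose_spec
      refine Finset.card_le_card_of_injOn fb (fun d hd => (hfbspec d hd).1) ?_
      intro d₁ h1 d₂ h2 heq
      have h1' : d₁ ∈ D := h1
      have h2' : d₂ ∈ D := h2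
      have hb1 := hfbspec d₁ h1'
      have hb2 := hfbspec d₂ h2'
      refine hcase (fb d₁) hb1.1 d₁ h1' d₂ h2' hb1.2.symm ?_
      rw [heq]; exact hb2.2.symm
    have hcov : IsVC G (A ∪ D) := by
      intro u v h
      have key : ∀ u v, G.Adj u v → u ∈ X → u ∈ A ∪ D := by
        intro u v h hu
        by_cases huC : u ∈ C
        · exact Finset.mem_union_left _ (hmemA.mpr ⟨huC, hu⟩)
        · have hvC : v ∈ C := (hC h).resolve_left huC
          have hvX : v ∉ X := fun hvX => hXadj h hu hvX
          exact Finset.mem_union_right _ (hmemD.mpr ⟨huC, v, hmemB.mpr ⟨hvC, hvX⟩, h⟩)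
      by_cases hu : u ∈ X
      · exact Or.inl (key u v h hu)
      · have hv : v ∈ X := by
          by_contra hv
          exact hXcadj h hu hv
        exact Or.inr (key v u h.symm hv)
    have hsub : ↑(A ∪ D) ⊆ X := by
      intro x hx
      rcases Finset.mem_union.mp hx with h | h
      · exact (hmemA.mp h).2
      · exact hDX h
    have hind : IsIS G ↑(A ∪ D) := hX.mono hsub
    have h1 : ivc G ≤ (A ∪ D).card := hivc_le _ hcov hind
    have h2 : (A ∪ D).card ≤ A.card + D.card := Finset.card_union_le _ _
    omega
  · push_neg at hcase
    obtain ⟨b, hbB, d₁, hd₁, d₂, hd₂, hadj₁, hadj₂, hne12⟩ := hcase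
    by_cases hA0 : A = ∅
    · -- C itself is independent
      have hsub : ↑C ⊆ Xᶜ := by
        intro x hx
        intro hxX
        have : x ∈ A := hmemA.mpr ⟨hx, hxX⟩
        simp [hA0] at this
      have := hivc_le C hC (hXc.mono hsub)
      omega
    · have hAcard : 1 ≤ A.card := Finset.card_pos.mpr (Finset.nonempty_iff_ne_empty.mpr hA0)
      have hd₁C : d₁ ∉ C := (hmemD.mp hd₁).1
      have hd₂C : d₂ ∉ C := (hmemD.mp hd₂).1
      have hbC : b ∈ C := (hmemB.mp hbB).1
      have hbX : b ∉ X := (hmemB.mp hbB).2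
      have hd₁X : d₁ ∈ X := hDX hd₁
      have hd₂X : d₂ ∈ X := hDX hd₂
      have hnadj12 : ¬ G.Adj d₁ d₂ := fun h => hXadj h hd₁X hd₂X
      have hbd₁ : b ≠ d₁ := fun h => hd₁C (h ▸ hbC)
      have hbd₂ : b ≠ d₂ := fun h => hd₂C (h ▸ hbC)
      -- facts about the pattern graph sP1P3
      have hP01 : (sP1P3 s).Adj (Sum.inr 0) (Sum.inr 1) := by
        rw [sP1P3, SimpleGraph.fromRel_adj]
        refine ⟨?_, Or.inl (Or.inl ⟨rfl, rfl⟩)⟩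
        intro h
        injection h with h'
        exact absurd h' (by decide)
      have hP12 : (sP1P3 s).Adj (Sum.inr 1) (Sum.inr 2) := by
        rw [sP1P3, SimpleGraph.fromRel_adj]
        refine ⟨?_, Or.inl (Or.inr ⟨rfl, rfl⟩)⟩
        intro h
        injection h with h'
        exact absurd h' (by decide)
      have hP02 : ¬ (sP1P3 s).Adj (Sum.inr 0) (Sum.inr 2) := by
        intro h
        rw [sP1P3, SimpleGraph.fromRel_adj] at h
        rcases h with ⟨-, (⟨-, h⟩ | ⟨h, -⟩) | (⟨h, -⟩ | ⟨h, -⟩)⟩ <;>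
          (injection h with h'; exact absurd h' (by decide))
      have hinl : ∀ (i : Fin s) (w), ¬ (sP1P3 s).Adj (Sum.inl i) w := by
        intro i w h
        rw [sP1P3, SimpleGraph.fromRel_adj] at h
        rcases h with ⟨-, (⟨h, -⟩ | ⟨h, -⟩) | (⟨-, h⟩ | ⟨-, h⟩)⟩ <;> exact absurd h (by simp)
      -- |E| ≤ s - 1, else we find an induced sP1 + P3
      have hEs : E.card ≤ s - 1 := by
        by_contra hcon
        push_neg at hcon
        have hsE : s ≤ E.card := by omega
        obtain ⟨T, hTsub, hTcard⟩ := Finset.exists_subset_card_eq hsE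
        set g : Fin s → V := fun i => ((Finset.equivFinOfCardEq hTcard).symm i : V) with hgdef
        have hgE : ∀ i, g i ∈ E := fun i => hTsub ((Finset.equivFinOfCardEq hTcard).symm i).2
        have hginj : Function.Injective g := fun i j h =>
          (Finset.equivFinOfCardEq hTcard).symm.injective (Subtype.coe_injective h)
        have hgC : ∀ i, g i ∉ C := fun i => (hmemE.mp (hgE i)).1
        have hgX : ∀ i, g i ∉ X := fun i => hEXc (hgE i)
        have hgnd₁ : ∀ i, ¬ G.Adj (g i) d₁ := fun i => hnadjCC (hgC i) hd₁C
        have hgnd₂ : ∀ i, ¬ G.Adj (g i) d₂ := fun i => hnadjCC (hgC i) hd₂C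
        have hgnb : ∀ i, ¬ G.Adj (g i) b := fun i h => hXcadj h (hgX i) hbX
        have hgng : ∀ i j, ¬ G.Adj (g i) (g j) := fun i j h => hXcadj h (hgX i) (hgX j)
        set f : Fin s ⊕ Fin 3 → V := Sum.elim g ![d₁, b, d₂] with hfdef
        have hgd₁ : ∀ i, g i ≠ d₁ := fun i h => (hgX i) (h ▸ hd₁X)
        have hgd₂ : ∀ i, g i ≠ d₂ := fun i h => (hgX i) (h ▸ hd₂X)
        have hgb : ∀ i, g i ≠ b := fun i h => (hgC i) (h ▸ hbC)
        have finj : Function.Injective f := by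
          intro u v huv
          rcases u with i | k <;> rcases v with j | l
          · exact congrArg Sum.inl (hginj huv)
          · exfalso
            fin_cases l
            · exact hgd₁ i huv
            · exact hgb i huv
            · exact hgd₂ i huv
          · exfalso
            fin_cases k
            · exact hgd₁ j huv.symm
            · exact hgb j huv.symm
            · exact hgd₂ j huv.symm
          · fin_cases k <;> fin_cases l
            · rfl
            · exact absurd (show d₁ = b from huv) hbd₁.symm
            · exact absurd (show d₁ = d₂ from huv) hne12
            · exact absurd (show b = d₁ from huv) hbd₁
            · rfl
            · exact absurd (show b = d₂ from huv) hbd₂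
            · exact absurd (show d₂ = d₁ from huv) hne12.symm
            · exact absurd (show d₂ = b from huv) hbd₂.symm
            · rfl
        have hmap : ∀ u v, G.Adj (f u) (f v) ↔ (sP1P3 s).Adj u v := by
          intro u v
          rcases u with i | k <;> rcases v with j | l
          · refine iff_of_false ?_ (hinl i _)
            intro h
            exact hgng i j h
          · refine iff_of_false ?_ (hinl i _)
            fin_cases l
            · exact hgnd₁ i
            · exact hgnb i
            · exact hgnd₂ i
          · refine iff_of_false ?_ (fun h => hinl j _ h.symm)
            fin_cases k
            · exact fun h => hgnd₁ j h.symm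
            · exact fun h => hgnb j h.symm
            · exact fun h => hgnd₂ j h.symm
          · fin_cases k <;> fin_cases l
            · exact iff_of_false (G.loopless.irrefl _) ((sP1P3 s).loopless.irrefl _)
            · exact iff_of_true hadj₁.symm hP01
            · exact iff_of_false hnadj12 hP02
            · exact iff_of_true hadj₁ hP01.symm
            · exact iff_of_false (G.loopless.irrefl _) ((sP1P3 s).loopless.irrefl _)
            · exact iff_of_true hadj₂ hP12
            · exact iff_of_false (fun h => hnadj12 h.symm) (fun h => hP02 h.symm)
            · exact iff_of_true hadj₂.symm hP12.symm
            · exact iff_of_false (G.loopless.irrefl _) ((sP1P3 s).loopless.irrefl _)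
        exact hfree.false ⟨⟨f, finj⟩, fun {u v} => hmap u v⟩
      -- the cover B ∪ E works
      have hcov : IsVC G (B ∪ E) := by
        intro u v h
        have key : ∀ u v, G.Adj u v → u ∉ X → u ∈ B ∪ E := by
          intro u v h hu
          by_cases huC : u ∈ C
          · exact Finset.mem_union_left _ (hmemB.mpr ⟨huC, hu⟩)
          · have hvC : v ∈ C := (hC h).resolve_left huC
            have hvX : v ∈ X := by
              by_contra hvX
              exact hXcadj h hu hvX
            exact Finset.mem_union_right _ (hmemE.mpr ⟨huC, v, hmemA.mpr ⟨hvC, hvX⟩, h⟩)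
        by_cases hu : u ∈ X
        · have hv : v ∉ X := fun hv => hXadj h hu hv
          exact Or.inr (key v u h.symm hv)
        · exact Or.inl (key u v h hu)
      have hsub : ↑(B ∪ E) ⊆ Xᶜ := by
        intro x hx
        rcases Finset.mem_union.mp hx with h | h
        · exact (hmemB.mp h).2
        · exact hEXc h
      have hind : IsIS G ↑(B ∪ E) := hXc.mono hsub
      have h1 : ivc G ≤ (B ∪ E).card := hivc_le _ hcov hind
      have h2 : (B ∪ E).card ≤ B.card + E.card := Finset.card_union_le _ _
      omega
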